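/- Let m ≥ 3 be an integer and let n be one of m(m−1)−2, m(m−1)−1, or m(m−1). Then the covering radius of the dihedral group D_n satisfies r(D_n) ≥ n − m. -/

import Mathlib

open Equiv

/-- The ℓ∞-distance between two permutations of `Fin n`. -/
noncomputable def linfDist {n : ℕ} (f g : Perm (Fin n)) : ℕ :=
  Finset.univ.sup fun i : Fin n => (((f i).val : ℤ) - ((g i).val : ℤ)).natAbs

/-- The distance from a permutation to a code `C`. -/
noncomputable def distToCode {n : ℕ} (f : Perm (Fin n)) (C : Set (Perm (Fin n))) : ℕ :=
  sInf (linfDist f '' C)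

/-- The covering radius of a code `C ⊆ Sₙ`. -/
noncomputable def coveringRadius {n : ℕ} (C : Set (Perm (Fin n))) : ℕ :=
  sSup (Set.range fun f : Perm (Fin n) => distToCode f C)

/-- The relabeling `C^π = π C π⁻¹`. -/
def conjCode {n : ℕ} (π : Perm (Fin n)) (C : Set (Perm (Fin n))) : Set (Perm (Fin n)) :=
  (fun g => π * g * π⁻¹) '' C

/-- Maximum covering radius over all relabelings. -/
noncomputable def Lmax {n : ℕ} (C : Set (Perm (Fin n))) : ℕ :=
  sSup (Set.range fun π : Perm (Fin n) => coveringRadius (conjCode π C))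

/-- Minimum covering radius over all relabelings. -/
noncomputable def Lmin {n : ℕ} (C : Set (Perm (Fin n))) : ℕ :=
  sInf (Set.range fun π : Perm (Fin n) => coveringRadius (conjCode π C))

/-- The `(p,q)`-type group `G_{p,q} = ⟨(1,…,p), (p+1,…,p+q)⟩ ⊆ S_{p+q}`
(using `0`-indexed `Fin (p+q)`). -/
def Gpq (p q : ℕ) : Subgroup (Perm (Fin (p + q))) :=
  Subgroup.closure
    { ((List.finRange p).map (Fin.castLE (Nat.le_add_right p q))).formPerm,
      ((List.finRange q).map (Fin.natAdd p)).formPerm }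

/-- The transitive cyclic group `Gₙ = ⟨(1,2,…,n)⟩`. -/
def Gcyc (n : ℕ) : Subgroup (Perm (Fin n)) := Subgroup.closure {finRotate n}

/-- The natural dihedral group
`Dₙ = ⟨(1,2,…,n), ∏_{i=1}^{⌊n/2⌋} (i, n-i)⟩` (using `0`-indexed `Fin n`). -/
def Dn (n : ℕ) : Subgroup (Perm (Fin n)) :=
  Subgroup.closure
    { finRotate n,
      (((List.finRange (n / 2)).map fun i =>
        Equiv.swap (⟨i.val, by have := i.isLt; omega⟩ : Fin n)
          (⟨n - 2 - i.val, by have := i.isLt; omega⟩ : Fin n)).prod) }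

namespace Stmt11Aux

/-! ### Building a permutation from a list of assignments -/

lemma exists_perm_of_pairs {X : Type*} [DecidableEq X] (l : List (X × X))
    (h1 : (l.map Prod.fst).Nodup) (h2 : (l.map Prod.snd).Nodup) :
    ∃ f : Perm X, ∀ p ∈ l, f p.1 = p.2 := by
  induction l with
  | nil => exact ⟨1, by simp⟩
  | cons a rest ih =>
    simp only [List.map_cons, List.nodup_cons] at h1 h2
    obtain ⟨f, hf⟩ := ih h1.2 h2.2
    refine ⟨(Equiv.swap (f a.1) a.2) * f, ?_⟩
    intro p hp
    rcases List.mem_cons.mp hp with rfl | hp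
    · simp [Equiv.Perm.mul_apply, Equiv.swap_apply_left]
    · have hfp : f p.1 = p.2 := hf p hp
      have hne1 : p.2 ≠ f a.1 := by
        intro h
        have : p.1 = a.1 := f.injective (by rw [hfp, h])
        exact h1.1 (this ▸ List.mem_map_of_mem (f := Prod.fst) hp)
      have hne2 : p.2 ≠ a.2 := by
        intro h
        exact h2.1 (h ▸ List.mem_map_of_mem (f := Prod.snd) hp)
      simp only [Equiv.Perm.mul_apply, hfp]
      exact Equiv.swap_apply_of_ne_of_ne hne1 hne2

/-! ### ZMod cast helpers -/

lemma cast_mod_self (n a : ℕ) : ((a % n : ℕ) : ZMod n) = a := by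
  conv_rhs => rw [← Nat.div_add_mod a n]
  push_cast
  simp [ZMod.natCast_self]

lemma castEqN (n t x y : ℕ) (h : x + t * n = y) : ((y : ℕ) : ZMod n) = x := by
  subst h
  push_cast
  simp [ZMod.natCast_self]

/-! ### Triangular numbers -/

def triN : ℕ → ℕ
  | 0 => 0
  | (a+1) => triN a + a + 1

lemma triN_succ (a : ℕ) : triN (a+1) = triN a + a + 1 := rfl

lemma triN_mono {a b : ℕ} (h : a ≤ b) : triN a ≤ triN b := by
  induction b with
  | zero => simp_all
  | succ b ih =>
    rcases Nat.lt_or_ge a (b+1) with h' | h'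
    · exact le_trans (ih (by omega)) (by rw [triN_succ]; omega)
    · have : a = b + 1 := by omega
      subst this; rfl

lemma two_mul_triN (a : ℕ) : 2 * triN a = a * (a + 1) := by
  induction a with
  | zero => rfl
  | succ b ih =>
    rw [triN_succ]
    have : (b+1) * ((b+1) + 1) = b * (b+1) + 2*(b+1) := by ring
    omega

lemma triN_inv : ∀ (M j : ℕ), j < triN M → ∃ a, a < M ∧ triN a ≤ j ∧ j ≤ triN a + a := by
  intro M
  induction M with
  | zero => intro j h; simp [triN] at h
  | succ b ih =>
    intro j h
    rcases Nat.lt_or_ge j (triN b) with h' | h'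
    · obtain ⟨a, ha⟩ := ih j h'
      exact ⟨a, by omega, ha.2.1, ha.2.2⟩
    · refine ⟨b, by omega, h', ?_⟩
      rw [triN_succ] at h; omega

lemma triN_inv2 : ∀ (M v : ℕ), 0 < v → v ≤ triN M →
    ∃ k, k + 1 ≤ M ∧ triN k < v ∧ v ≤ triN (k+1) := by
  intro M
  induction M with
  | zero => intro v h1 h2; simp [triN] at h2; omega
  | succ b ih =>
    intro v h1 h2
    rcases le_or_gt v (triN b) with h' | h'
    · obtain ⟨k, hk⟩ := ih v h1 h'
      exact ⟨k, by omega, hk.2.1, hk.2.2⟩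
    · exact ⟨b, by omega, h', h2⟩

/-! ### The reflection generator of `Dn` -/

def sg (n : ℕ) : Perm (Fin n) :=
  (((List.finRange (n / 2)).map fun i =>
    Equiv.swap (⟨i.val, by have := i.isLt; omega⟩ : Fin n)
      (⟨n - 2 - i.val, by have := i.isLt; omega⟩ : Fin n)).prod)

lemma Dn_eq (n : ℕ) : Dn n = Subgroup.closure {finRotate n, sg n} := rfl

def swN (n v : ℕ) : Perm (Fin n) :=
  if h : v < n / 2 then
    Equiv.swap (⟨v, by omega⟩ : Fin n) (⟨n - 2 - v, by omega⟩ : Fin n)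
  else 1

lemma sg_eq (n : ℕ) : sg n = ((List.range (n/2)).map (swN n)).prod := by
  unfold sg
  congr 1
  have h1 : (List.finRange (n/2)).map (fun i : Fin (n/2) =>
      Equiv.swap (⟨i.val, by have := i.isLt; omega⟩ : Fin n)
        (⟨n - 2 - i.val, by have := i.isLt; omega⟩ : Fin n))
      = ((List.finRange (n/2)).map Fin.val).map (swN n) := by
    rw [List.map_map]
    apply List.map_congr_left
    intro i _
    simp only [Function.comp_apply, swN, dif_pos i.isLt]
  rw [h1]; congr 1; apply List.ext_getElem <;> simp

lemma prodG_val (n : ℕ) (hn : 2 ≤ n) :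
    ∀ (K : ℕ), K ≤ n/2 → ∀ j : Fin n,
      ((((List.range K).map (swN n)).prod) j).val =
        if j.val < K ∨ (j.val ≤ n - 2 ∧ n - 2 - j.val < K) then n - 2 - j.val else j.val := by
  intro K
  induction K with
  | zero => intro _ j; simp
  | succ K ih =>
    intro hK j
    have hKn : K < n / 2 := by omega
    have h2K : 2 * K ≤ n - 2 := by omega
    rw [List.range_succ, List.map_append, List.prod_append, List.map_singleton,
      List.prod_singleton, Equiv.Perm.mul_apply]
    have hsw : swN n K = Equiv.swap (⟨K, by omega⟩ : Fin n) (⟨n - 2 - K, by omega⟩ : Fin n) := by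
      simp only [swN, dif_pos hKn]
    by_cases hjK : j.val = K
    · have hj : j = (⟨K, by omega⟩ : Fin n) := Fin.ext hjK
      rw [hsw, hj, Equiv.swap_apply_left, ih (by omega)]
      simp only
      split_ifs <;> omega
    · by_cases hjm : j.val = n - 2 - K
      · have hj : j = (⟨n - 2 - K, by omega⟩ : Fin n) := Fin.ext hjm
        rw [hsw, hj, Equiv.swap_apply_right, ih (by omega)]
        simp only
        split_ifs <;> omega
      · have hne1 : j ≠ (⟨K, by omega⟩ : Fin n) := fun h => hjK (by rw [h])
        have hne2 : j ≠ (⟨n - 2 - K, by omega⟩ : Fin n) := fun h => hjm (by rw [h])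
        rw [hsw, Equiv.swap_apply_of_ne_of_ne hne1 hne2, ih (by omega)]
        have := j.isLt
        split_ifs <;> omega

lemma sg_val (n : ℕ) (hn : 4 ≤ n) (j : Fin n) :
    ((sg n) j).val = if j.val = n - 1 then n - 1 else n - 2 - j.val := by
  rw [sg_eq, prodG_val n (by omega) (n/2) le_rfl j]
  have := j.isLt
  split_ifs <;> omega

/-! ### zeta -/

def zeta {n : ℕ} (i : Fin n) : ZMod n := (i.val : ZMod n)

lemma zeta_val {n : ℕ} [NeZero n] (i : Fin n) : (zeta i).val = i.val :=
  ZMod.val_natCast_of_lt i.isLt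

lemma zmod_linear {n : ℕ} (x y : ℕ) (h : x + y + 2 = n ∨ x + y + 2 = 2*n) :
    (x : ZMod n) = -2 - y := by
  have h0 : ((x + y + 2 : ℕ) : ZMod n) = 0 := by
    rcases h with h | h <;> rw [h] <;> push_cast <;> simp [ZMod.natCast_self]
  push_cast at h0
  linear_combination h0

lemma zeta_finRotate {n : ℕ} (hn : 1 ≤ n) (i : Fin n) :
    zeta (finRotate n i) = zeta i + 1 := by
  obtain ⟨N, rfl⟩ : ∃ N, n = N + 1 := ⟨n - 1, by omega⟩
  rw [finRotate_succ_apply]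
  show (((i + 1 : Fin (N+1)).val : ℕ) : ZMod (N+1)) = _
  rw [Fin.val_add, cast_mod_self]
  push_cast
  congr 1
  rw [Fin.val_one', cast_mod_self]
  norm_num

lemma zeta_sg {n : ℕ} (hn : 4 ≤ n) (i : Fin n) :
    zeta (sg n i) = (-2 : ZMod n) - zeta i := by
  have hv := sg_val n hn i
  have hlt := i.isLt
  apply zmod_linear
  rw [hv]
  split_ifs <;> omega

lemma mem_Dn_form {n : ℕ} (hn : 4 ≤ n) {g : Perm (Fin n)} (hg : g ∈ Dn n) :
    (∃ k : ZMod n, ∀ i, zeta (g i) = zeta i + k) ∨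
    (∃ k : ZMod n, ∀ i, zeta (g i) = k - zeta i) := by
  rw [Dn_eq] at hg
  induction hg using Subgroup.closure_induction with
  | mem x hx =>
    simp only [Set.mem_insert_iff, Set.mem_singleton_iff] at hx
    rcases hx with rfl | rfl
    · exact Or.inl ⟨1, fun i => zeta_finRotate (by omega) i⟩
    · exact Or.inr ⟨-2, fun i => zeta_sg hn i⟩
  | one => exact Or.inl ⟨0, by simp [zeta]⟩
  | mul x y _ _ hx hy =>
    rcases hx with ⟨k1, h1⟩ | ⟨k1, h1⟩ <;> rcases hy with ⟨k2, h2⟩ | ⟨k2, h2⟩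
    · exact Or.inl ⟨k2 + k1, fun i => by rw [Equiv.Perm.mul_apply, h1, h2]; ring⟩
    · exact Or.inr ⟨k2 + k1, fun i => by rw [Equiv.Perm.mul_apply, h1, h2]; ring⟩
    · exact Or.inr ⟨k1 - k2, fun i => by rw [Equiv.Perm.mul_apply, h1, h2]; ring⟩
    · exact Or.inl ⟨k1 - k2, fun i => by rw [Equiv.Perm.mul_apply, h1, h2]; ring⟩
  | inv x _ hx =>
    rcases hx with ⟨k, h⟩ | ⟨k, h⟩
    · refine Or.inl ⟨-k, fun i => ?_⟩
      have h' := h (x⁻¹ i)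
      rw [← Equiv.Perm.mul_apply, mul_inv_cancel, Equiv.Perm.one_apply] at h'
      linear_combination -h'
    · refine Or.inr ⟨k, fun i => ?_⟩
      have h' := h (x⁻¹ i)
      rw [← Equiv.Perm.mul_apply, mul_inv_cancel, Equiv.Perm.one_apply] at h'
      linear_combination h'

/-! ### Assembly -/

lemma assembly {n m : ℕ} (hn : 4 ≤ n) (hmn : m ≤ n) {L : ℕ}
    (pos val : Fin L → Fin n) (hpos : Function.Injective pos) (hval : Function.Injective val)
    (hRot : ∀ k : ZMod n, ∃ l, (n:ℤ) - m ≤ |(((val l).val : ℤ)) - (((zeta (pos l) + k).val : ℕ) : ℤ)|)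
    (hRef : ∀ k : ZMod n, ∃ l, (n:ℤ) - m ≤ |(((val l).val : ℤ)) - (((k - zeta (pos l)).val : ℕ) : ℤ)|) :
    (n:ℤ) - m ≤ (coveringRadius (Dn n : Set (Perm (Fin n))) : ℤ) := by
  haveI : NeZero n := ⟨by omega⟩
  obtain ⟨f, hf⟩ := exists_perm_of_pairs ((List.finRange L).map fun l => (pos l, val l))
    (by rw [List.map_map]; exact (List.nodup_finRange L).map hpos)
    (by rw [List.map_map]; exact (List.nodup_finRange L).map hval)
  have hfl : ∀ l : Fin L, f (pos l) = val l := fun l =>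
    hf _ (List.mem_map_of_mem (List.mem_finRange l))
  have key : ∀ g ∈ (Dn n : Set (Perm (Fin n))), (n:ℤ) - m ≤ ((linfDist f g : ℕ) : ℤ) := by
    intro g hg
    have main : ∃ i : Fin n, (n:ℤ) - m ≤ |(((f i).val : ℤ)) - (((g i).val : ℤ))| := by
      rcases mem_Dn_form hn hg with ⟨k, hk⟩ | ⟨k, hk⟩
      · obtain ⟨l, hl⟩ := hRot k
        refine ⟨pos l, ?_⟩
        have e1 : ((f (pos l)).val : ℤ) = ((val l).val : ℤ) := by
          exact_mod_cast congrArg (fun x : Fin n => (x.val : ℤ)) (hfl l)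
        have h2 : (g (pos l)).val = (zeta (pos l) + k).val := by
          have hcv := congrArg ZMod.val (hk (pos l))
          rwa [zeta_val] at hcv
        have e2 : ((g (pos l)).val : ℤ) = (((zeta (pos l) + k).val : ℕ) : ℤ) := by
          exact_mod_cast h2
        rw [e1, e2]; exact hl
      · obtain ⟨l, hl⟩ := hRef k
        refine ⟨pos l, ?_⟩
        have e1 : ((f (pos l)).val : ℤ) = ((val l).val : ℤ) := by
          exact_mod_cast congrArg (fun x : Fin n => (x.val : ℤ)) (hfl l)
        have h2 : (g (pos l)).val = (k - zeta (pos l)).val := by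
          have hcv := congrArg ZMod.val (hk (pos l))
          rwa [zeta_val] at hcv
        have e2 : ((g (pos l)).val : ℤ) = (((k - zeta (pos l)).val : ℕ) : ℤ) := by
          exact_mod_cast h2
        rw [e1, e2]; exact hl
    obtain ⟨i, hi⟩ := main
    have hle2 : (n:ℤ) - m ≤ (((((f i).val:ℤ) - ((g i).val:ℤ)).natAbs : ℕ) : ℤ) := by
      rwa [← Int.abs_eq_natAbs]
    refine le_trans hle2 ?_
    have hsup := Finset.le_sup (f := fun i : Fin n => (((f i).val:ℤ) - ((g i).val:ℤ)).natAbs)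
      (Finset.mem_univ i)
    have : (((f i).val:ℤ) - ((g i).val:ℤ)).natAbs ≤ linfDist f g := hsup
    exact_mod_cast this
  have hdist : (n:ℤ) - m ≤ ((distToCode f (Dn n : Set (Perm (Fin n)))) : ℤ) := by
    have hne : (linfDist f '' (Dn n : Set (Perm (Fin n)))).Nonempty :=
      ⟨linfDist f 1, 1, (Dn n).one_mem, rfl⟩
    have hB : ((n - m : ℕ) : ℤ) = (n:ℤ) - m := by omega
    rw [← hB]
    have hstep : (n - m : ℕ) ≤ distToCode f (Dn n : Set (Perm (Fin n))) := by
      refine le_csInf hne ?_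
      rintro b ⟨g, hg, rfl⟩
      have := key g hg
      omega
    exact_mod_cast hstep
  have hcov : distToCode f (Dn n : Set (Perm (Fin n))) ≤ coveringRadius (Dn n : Set (Perm (Fin n))) := by
    exact le_csSup ((Set.finite_range _).bddAbove) ⟨f, rfl⟩
  have : ((distToCode f (Dn n : Set (Perm (Fin n)))) : ℤ) ≤ _ := Int.ofNat_le.mpr hcov
  exact le_trans hdist this

/-! ### The general configuration (m = M + 4) -/

lemma triN_lt {a b : ℕ} (h : a < b) : triN a < triN b := by
  have h1 : triN (a+1) ≤ triN b := triN_mono h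
  rw [triN_succ] at h1
  omega

/-- positions of the large values `n - (M+4) + a` -/
def pXn (M n a : ℕ) : ℕ :=
  if a = 0 then 2 else if a = 1 then 0 else if a = M+3 then triN (M+3) else triN a

/-- positions of the small values `b` -/
def pYn (M n b : ℕ) : ℕ :=
  if b = M+3 then n-1 else if b = M+2 then 1 else if b = 0 then triN (M+3) - 1
  else if b = 1 then n - triN (M+2) else n + 1 - triN (M+3-b)

section Config

variable {M c n : ℕ} (hc : c ≤ 2) (hnc : n + c = (M+4)*(M+3))

include hc hnc

lemma basic_facts : n + c = M*M + 7*M + 12 ∧ 2 * triN (M+3) = n + c := by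
  constructor
  · have h : (M+4)*(M+3) = M*M + 7*M + 12 := by ring
    omega
  · have h1 := two_mul_triN (M+3)
    have h2 : (M+3)*((M+3)+1) = (M+4)*(M+3) := by ring
    omega

lemma pXn_cases (a : ℕ) (ha : a ≤ M+3) :
    (a = 0 ∧ pXn M n a = 2) ∨ (a = 1 ∧ pXn M n a = 0) ∨
    (2 ≤ a ∧ a ≤ M+2 ∧ pXn M n a = triN a ∧ 3 ≤ triN a ∧ triN a ≤ triN (M+2)) ∨
    (a = M+3 ∧ pXn M n a = triN (M+3)) := by
  by_cases h0 : a = 0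
  · exact Or.inl ⟨h0, by simp [pXn, h0]⟩
  by_cases h1 : a = 1
  · exact Or.inr (Or.inl ⟨h1, by simp [pXn, h1]⟩)
  by_cases h3 : a = M+3
  · refine Or.inr (Or.inr (Or.inr ⟨h3, ?_⟩))
    simp only [pXn, if_neg h0, if_neg h1, if_pos h3]
  · refine Or.inr (Or.inr (Or.inl ⟨by omega, by omega, ?_, ?_, triN_mono (by omega)⟩))
    · simp only [pXn, if_neg h0, if_neg h1, if_neg h3]
    · have := triN_mono (show 2 ≤ a by omega)
      have ht2 : triN 2 = 3 := rfl
      omega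

lemma pYn_cases (b : ℕ) (hb : b ≤ M+3) :
    (b = M+3 ∧ pYn M n b = n-1) ∨ (b = M+2 ∧ pYn M n b = 1) ∨
    (b = 0 ∧ pYn M n b = triN (M+3) - 1) ∨ (b = 1 ∧ pYn M n b = n - triN (M+2)) ∨
    (2 ≤ b ∧ b ≤ M+1 ∧ pYn M n b = n + 1 - triN (M+3-b) ∧
      3 ≤ triN (M+3-b) ∧ triN (M+3-b) ≤ triN (M+1)) := by
  by_cases h3 : b = M+3
  · exact Or.inl ⟨h3, by simp [pYn, h3]⟩
  by_cases h2 : b = M+2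
  · refine Or.inr (Or.inl ⟨h2, ?_⟩)
    simp only [pYn, if_neg h3, if_pos h2]
  by_cases h0 : b = 0
  · refine Or.inr (Or.inr (Or.inl ⟨h0, ?_⟩))
    simp only [pYn, if_neg h3, if_neg h2, if_pos h0]
  by_cases h1 : b = 1
  · refine Or.inr (Or.inr (Or.inr (Or.inl ⟨h1, ?_⟩)))
    simp only [pYn, if_neg h3, if_neg h2, if_neg h0, if_pos h1]
  · refine Or.inr (Or.inr (Or.inr (Or.inr ⟨by omega, by omega, ?_, ?_, triN_mono (by omega)⟩)))
    · simp only [pYn, if_neg h3, if_neg h2, if_neg h0, if_neg h1]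
    · have := triN_mono (show 2 ≤ M+3-b by omega)
      have ht2 : triN 2 = 3 := rfl
      omega

lemma pXn_lt (a : ℕ) (ha : a ≤ M+3) : pXn M n a < n := by
  obtain ⟨hpoly, h2T⟩ := basic_facts hc hnc
  have hs3 : triN (M+3) = triN (M+2) + (M+3) := triN_succ _
  have hs2 : triN (M+2) = triN (M+1) + (M+2) := triN_succ _
  have hs1 : triN (M+1) = triN M + (M+1) := triN_succ _
  rcases pXn_cases hc hnc a ha with ⟨_, h⟩ | ⟨_, h⟩ | ⟨_, _, h, h', h''⟩ | ⟨_, h⟩ <;> omega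

lemma pYn_lt (b : ℕ) (hb : b ≤ M+3) : pYn M n b < n := by
  obtain ⟨hpoly, h2T⟩ := basic_facts hc hnc
  have hs3 : triN (M+3) = triN (M+2) + (M+3) := triN_succ _
  have hs2 : triN (M+2) = triN (M+1) + (M+2) := triN_succ _
  have hs1 : triN (M+1) = triN M + (M+1) := triN_succ _
  rcases pYn_cases hc hnc b hb with ⟨_, h⟩ | ⟨_, h⟩ | ⟨_, h⟩ | ⟨_, h⟩ | ⟨_, _, h, h', h''⟩ <;> omega

lemma pXn_inj (a a' : ℕ) (h : a < a') (ha' : a' ≤ M+3) : pXn M n a ≠ pXn M n a' := by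
  obtain ⟨hpoly, h2T⟩ := basic_facts hc hnc
  have hs3 : triN (M+3) = triN (M+2) + (M+3) := triN_succ _
  have hs2 : triN (M+2) = triN (M+1) + (M+2) := triN_succ _
  have hs1 : triN (M+1) = triN M + (M+1) := triN_succ _
  have hlt := triN_lt h
  rcases pXn_cases hc hnc a (by omega) with ⟨ha, hA⟩ | ⟨ha, hA⟩ | ⟨ha, ha2, hA, hA', hA''⟩ | ⟨ha, hA⟩ <;>
    rcases pXn_cases hc hnc a' ha' with ⟨hb, hB⟩ | ⟨hb, hB⟩ | ⟨hb, hb2, hB, hB', hB''⟩ | ⟨hb, hB⟩ <;>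
    omega

lemma pYn_inj (b b' : ℕ) (h : b < b') (hb' : b' ≤ M+3) : pYn M n b ≠ pYn M n b' := by
  obtain ⟨hpoly, h2T⟩ := basic_facts hc hnc
  have hs3 : triN (M+3) = triN (M+2) + (M+3) := triN_succ _
  have hs2 : triN (M+2) = triN (M+1) + (M+2) := triN_succ _
  have hs1 : triN (M+1) = triN M + (M+1) := triN_succ _
  have hlt2 := triN_lt (show M+3-b' < M+3-b by omega)
  rcases pYn_cases hc hnc b (by omega) with ⟨ha, hA⟩ | ⟨ha, hA⟩ | ⟨ha, hA⟩ | ⟨ha, hA⟩ | ⟨ha, ha2, hA, hA', hA''⟩ <;>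
    rcases pYn_cases hc hnc b' hb' with ⟨hb, hB⟩ | ⟨hb, hB⟩ | ⟨hb, hB⟩ | ⟨hb, hB⟩ | ⟨hb, hb2, hB, hB', hB''⟩ <;>
    omega

lemma pXY_ne (a b : ℕ) (ha : a ≤ M+3) (hb : b ≤ M+3) : pXn M n a ≠ pYn M n b := by
  obtain ⟨hpoly, h2T⟩ := basic_facts hc hnc
  have hs3 : triN (M+3) = triN (M+2) + (M+3) := triN_succ _
  have hs2 : triN (M+2) = triN (M+1) + (M+2) := triN_succ _
  have hs1 : triN (M+1) = triN M + (M+1) := triN_succ _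
  rcases pXn_cases hc hnc a ha with ⟨ha0, hA⟩ | ⟨ha0, hA⟩ | ⟨ha0, ha2, hA, hA', hA''⟩ | ⟨ha0, hA⟩ <;>
    rcases pYn_cases hc hnc b hb with ⟨hb0, hB⟩ | ⟨hb0, hB⟩ | ⟨hb0, hB⟩ | ⟨hb0, hB⟩ | ⟨hb0, hb2, hB, hB', hB''⟩ <;>
    omega

lemma refCov (k : ZMod n) :
    ∃ a b : ℕ, b ≤ a ∧ a ≤ M+3 ∧
      (k = ((pXn M n a + b : ℕ) : ZMod n) ∨
       k = ((pYn M n b + (n - (M+4) + a) : ℕ) : ZMod n)) := by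
  obtain ⟨hpoly, h2T⟩ := basic_facts hc hnc
  have hs3 : triN (M+3) = triN (M+2) + (M+3) := triN_succ _
  have hs2 : triN (M+2) = triN (M+1) + (M+2) := triN_succ _
  have hs1 : triN (M+1) = triN M + (M+1) := triN_succ _
  have ht0 : triN 0 = 0 := rfl
  have ht1 : triN 1 = 1 := rfl
  have ht2 : triN 2 = 3 := rfl
  haveI : NeZero n := ⟨by omega⟩
  set j := k.val with hjdef
  have hjn : j < n := ZMod.val_lt k
  have hkj : ((j : ℕ) : ZMod n) = k := ZMod.natCast_zmod_val k
  by_cases c1 : j ≤ 1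
  · refine ⟨1, j, by omega, by omega, Or.inl ?_⟩
    have hpx : pXn M n 1 = 0 := by simp [pXn]
    rw [← hkj]
    exact castEqN n 0 (pXn M n 1 + j) j (by omega)
  by_cases c2 : j = 2
  · refine ⟨0, 0, le_rfl, by omega, Or.inl ?_⟩
    have hpx : pXn M n 0 = 2 := by simp [pXn]
    rw [← hkj]
    exact castEqN n 0 (pXn M n 0 + 0) j (by omega)
  by_cases c3 : j < triN (M+3)
  · obtain ⟨a, haM, hta, htaa⟩ := triN_inv (M+3) j c3
    have ha2 : 2 ≤ a := by
      rcases Nat.lt_or_ge a 2 with h | h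
      · interval_cases a <;> omega
      · exact h
    have hpx : pXn M n a = triN a := by
      simp only [pXn]
      rw [if_neg (by omega), if_neg (by omega), if_neg (by omega)]
    refine ⟨a, j - triN a, by omega, by omega, Or.inl ?_⟩
    rw [← hkj]
    exact castEqN n 0 (pXn M n a + (j - triN a)) j (by omega)
  by_cases c4 : j ≤ triN (M+3) + (M+3)
  · have hpx : pXn M n (M+3) = triN (M+3) := by
      simp only [pXn]
      rw [if_neg (by omega), if_neg (by omega)]
      simp
    refine ⟨M+3, j - triN (M+3), by omega, le_rfl, Or.inl ?_⟩
    rw [← hkj]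
    exact castEqN n 0 (pXn M n (M+3) + (j - triN (M+3))) j (by omega)
  by_cases c5 : j ≤ n - 3
  · obtain ⟨k', hk1, hk2, hk3⟩ := triN_inv2 (M+2) (n+1-j) (by omega) (by omega)
    have hsk : triN (k'+1) = triN k' + k' + 1 := triN_succ _
    have hk'2 : 2 ≤ k' := by
      rcases Nat.lt_or_ge k' 2 with h | h
      · have := triN_mono (show k'+1 ≤ 2 by omega); omega
      · exact h
    have hidx : M+3-(M+3-k') = k' := by omega
    have hpy : pYn M n (M+3-k') = n + 1 - triN k' := by
      simp only [pYn]
      rw [if_neg (by omega), if_neg (by omega), if_neg (by omega), if_neg (by omega), hidx]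
    refine ⟨M+4-((n+1-j) - triN k'), M+3-k', by omega, by omega, Or.inr ?_⟩
    rw [← hkj]
    exact (castEqN n 1 j (pYn M n (M+3-k') + (n - (M+4) + (M+4-((n+1-j) - triN k')))) (by omega)).symm
  by_cases c6 : j = n - 2
  · have hpy : pYn M n (M+3) = n - 1 := by simp [pYn]
    refine ⟨M+3, M+3, le_rfl, le_rfl, Or.inr ?_⟩
    rw [← hkj]
    exact (castEqN n 1 j (pYn M n (M+3) + (n - (M+4) + (M+3))) (by omega)).symm
  · -- j = n-1
    have hj : j = n - 1 := by omega
    have hpy : pYn M n (M+2) = 1 := by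
      simp only [pYn]
      rw [if_neg (by omega)]
      simp
    refine ⟨M+2, M+2, le_rfl, by omega, Or.inr ?_⟩
    rw [← hkj]
    exact castEqN n 0 (pYn M n (M+2) + (n - (M+4) + (M+2))) j (by omega)

lemma rotCov (k : ZMod n) :
    ∃ a b : ℕ, b ≤ a ∧ a ≤ M+3 ∧
      ((((pXn M n a : ℕ) : ZMod n) + k = ((b : ℕ) : ZMod n)) ∨
       (((pYn M n b : ℕ) : ZMod n) + k = ((n - (M+4) + a : ℕ) : ZMod n))) := by
  obtain ⟨hpoly, h2T⟩ := basic_facts hc hnc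
  have hs3 : triN (M+3) = triN (M+2) + (M+3) := triN_succ _
  have hs2 : triN (M+2) = triN (M+1) + (M+2) := triN_succ _
  have hs1 : triN (M+1) = triN M + (M+1) := triN_succ _
  have ht0 : triN 0 = 0 := rfl
  have ht1 : triN 1 = 1 := rfl
  have ht2 : triN 2 = 3 := rfl
  haveI : NeZero n := ⟨by omega⟩
  set j := k.val with hjdef
  have hjn : j < n := ZMod.val_lt k
  have hkj : ((j : ℕ) : ZMod n) = k := ZMod.natCast_zmod_val k
  by_cases c1 : j ≤ 1
  · refine ⟨1, j, by omega, by omega, Or.inl ?_⟩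
    have hpx : pXn M n 1 = 0 := by simp [pXn]
    rw [← hkj, ← Nat.cast_add]
    exact castEqN n 0 j (pXn M n 1 + j) (by omega)
  by_cases c2 : j + 2 ≤ triN (M+1)
  · obtain ⟨k', hk1, hk2, hk3⟩ := triN_inv2 (M+1) (j+2) (by omega) (by omega)
    have hsk : triN (k'+1) = triN k' + k' + 1 := triN_succ _
    have hk'1 : 1 ≤ k' := by
      rcases Nat.lt_or_ge k' 1 with h | h
      · have := triN_mono (show k'+1 ≤ 1 by omega); omega
      · exact h
    have hidx : M+3-(M+2-k') = k'+1 := by omega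
    have hpy : pYn M n (M+2-k') = n + 1 - triN (k'+1) := by
      simp only [pYn]
      rw [if_neg (by omega), if_neg (by omega), if_neg (by omega), if_neg (by omega), hidx]
    refine ⟨M+4-(triN (k'+1) - 1 - j), M+2-k', by omega, by omega, Or.inr ?_⟩
    rw [← hkj, ← Nat.cast_add]
    exact castEqN n 0 (n - (M+4) + (M+4-(triN (k'+1) - 1 - j))) (pYn M n (M+2-k') + j) (by omega)
  by_cases c3 : j + 1 ≤ triN (M+2)
  · have hpy : pYn M n 1 = n - triN (M+2) := by
      simp only [pYn]
      rw [if_neg (by omega), if_neg (by omega), if_neg (by omega)]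
      simp
    refine ⟨M+4-(triN (M+2) - j), 1, by omega, by omega, Or.inr ?_⟩
    rw [← hkj, ← Nat.cast_add]
    exact castEqN n 0 (n - (M+4) + (M+4-(triN (M+2) - j))) (pYn M n 1 + j) (by omega)
  by_cases c4 : j + c ≤ triN (M+3)
  · have hpy : pYn M n 0 = triN (M+3) - 1 := by
      simp only [pYn]
      rw [if_neg (by omega), if_neg (by omega)]
      simp
    refine ⟨M+4-(triN (M+3) + 1 - c - j), 0, by omega, by omega, Or.inr ?_⟩
    rw [← hkj, ← Nat.cast_add]
    exact castEqN n 0 (n - (M+4) + (M+4-(triN (M+3) + 1 - c - j))) (pYn M n 0 + j) (by omega)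
  by_cases c5 : j + c ≤ triN (M+3) + (M+3)
  · have hpx : pXn M n (M+3) = triN (M+3) := by
      simp only [pXn]
      rw [if_neg (by omega), if_neg (by omega)]
      simp
    refine ⟨M+3, j + c - triN (M+3), by omega, le_rfl, Or.inl ?_⟩
    rw [← hkj, ← Nat.cast_add]
    exact castEqN n 1 (j + c - triN (M+3)) (pXn M n (M+3) + j) (by omega)
  by_cases c6 : j ≤ n - 2
  · obtain ⟨k', hk1, hk2, hk3⟩ := triN_inv2 (M+2) (n-j) (by omega) (by omega)
    have hsk : triN (k'+1) = triN k' + k' + 1 := triN_succ _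
    have hk'1 : 1 ≤ k' := by
      rcases Nat.lt_or_ge k' 1 with h | h
      · have := triN_mono (show k'+1 ≤ 1 by omega); omega
      · exact h
    have hpx : pXn M n (k'+1) = triN (k'+1) := by
      simp only [pXn]
      rw [if_neg (by omega), if_neg (by omega), if_neg (by omega)]
    refine ⟨k'+1, triN (k'+1) - (n-j), by omega, by omega, Or.inl ?_⟩
    rw [← hkj, ← Nat.cast_add]
    exact castEqN n 1 (triN (k'+1) - (n-j)) (pXn M n (k'+1) + j) (by omega)
  · have hj : j = n - 1 := by omega
    have hpx : pXn M n 2 = triN 2 := by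
      simp only [pXn]
      rw [if_neg (by omega), if_neg (by omega), if_neg (by omega)]
    refine ⟨2, 2, le_rfl, by omega, Or.inl ?_⟩
    rw [← hkj, ← Nat.cast_add]
    exact castEqN n 1 2 (pXn M n 2 + j) (by omega)

lemma general_bound : (n:ℤ) - ((M+4 : ℕ) : ℤ) ≤ (coveringRadius (Dn n : Set (Perm (Fin n))) : ℤ) := by
  obtain ⟨hpoly, h2T⟩ := basic_facts hc hnc
  have hn4 : 4 ≤ n := by omega
  have hmn : (M+4) ≤ n := by omega
  have h2mn : (M+4) + (M+4) ≤ n := by omega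
  haveI : NeZero n := ⟨by omega⟩
  have hposlt : ∀ x, x < (M+4) + (M+4) →
      (if x < M+4 then pXn M n x else pYn M n (x - (M+4))) < n := by
    intro x hx
    split
    · exact pXn_lt hc hnc _ (by omega)
    · exact pYn_lt hc hnc _ (by omega)
  have hvallt : ∀ x, x < (M+4) + (M+4) →
      (if x < M+4 then n - (M+4) + x else x - (M+4)) < n := by
    intro x hx; split <;> omega
  have hposne : ∀ x y, x < y → y < (M+4) + (M+4) →
      (if x < M+4 then pXn M n x else pYn M n (x - (M+4))) ≠
      (if y < M+4 then pXn M n y else pYn M n (y - (M+4))) := by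
    intro x y hxy hy
    by_cases h1 : x < M+4 <;> by_cases h2 : y < M+4
    · rw [if_pos h1, if_pos h2]; exact pXn_inj hc hnc x y hxy (by omega)
    · rw [if_pos h1, if_neg h2]; exact pXY_ne hc hnc x (y - (M+4)) (by omega) (by omega)
    · omega
    · rw [if_neg h1, if_neg h2]; exact pYn_inj hc hnc (x - (M+4)) (y - (M+4)) (by omega) (by omega)
  refine assembly (m := M+4) hn4 hmn (L := (M+4) + (M+4))
    (fun l => ⟨if l.val < M+4 then pXn M n l.val else pYn M n (l.val - (M+4)), hposlt _ l.isLt⟩)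
    (fun l => ⟨if l.val < M+4 then n - (M+4) + l.val else l.val - (M+4), hvallt _ l.isLt⟩)
    ?_ ?_ ?_ ?_
  · -- pos injective
    intro l1 l2 he
    have hv := congrArg Fin.val he
    simp only at hv
    rcases lt_trichotomy l1.val l2.val with h | h | h
    · exact absurd hv (hposne _ _ h l2.isLt)
    · exact Fin.ext h
    · exact absurd hv.symm (hposne _ _ h l1.isLt)
  · -- val injective
    intro l1 l2 he
    have hv := congrArg Fin.val he
    simp only at hv
    apply Fin.ext
    split_ifs at hv <;> omega
  · -- hRot
    intro k
    obtain ⟨a, b, hba, ha, hor⟩ := rotCov hc hnc k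
    rcases hor with hid | hid
    · refine ⟨⟨a, by omega⟩, ?_⟩
      show (n:ℤ) - ((M+4 : ℕ):ℤ) ≤
        |((((if a < M+4 then n - (M+4) + a else a - (M+4)) : ℕ) : ℤ)) -
          (((((if a < M+4 then pXn M n a else pYn M n (a - (M+4))) : ℕ) : ZMod n) + k).val : ℤ)|
      rw [if_pos (show a < M+4 by omega), if_pos (show a < M+4 by omega), hid,
        ZMod.val_natCast_of_lt (show b < n by omega)]
      refine le_trans ?_ (le_abs_self _)
      push_cast
      omega
    · refine ⟨⟨(M+4) + b, by omega⟩, ?_⟩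
      show (n:ℤ) - ((M+4 : ℕ):ℤ) ≤
        |((((if (M+4) + b < M+4 then n - (M+4) + ((M+4) + b) else ((M+4) + b) - (M+4)) : ℕ) : ℤ)) -
          (((((if (M+4) + b < M+4 then pXn M n ((M+4) + b) else pYn M n (((M+4) + b) - (M+4))) : ℕ) : ZMod n) + k).val : ℤ)|
      rw [if_neg (by omega), if_neg (by omega),
        show ((M+4) + b) - (M+4) = b by omega, hid,
        ZMod.val_natCast_of_lt (show n - (M+4) + a < n by omega)]
      refine le_trans ?_ (neg_le_abs _)
      push_cast
      omega
  · -- hRef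
    intro k
    obtain ⟨a, b, hba, ha, hor⟩ := refCov hc hnc k
    rcases hor with hid | hid
    · refine ⟨⟨a, by omega⟩, ?_⟩
      have hsub : k - (((pXn M n a : ℕ)) : ZMod n) = ((b : ℕ) : ZMod n) := by
        rw [hid]; push_cast; ring
      show (n:ℤ) - ((M+4 : ℕ):ℤ) ≤
        |((((if a < M+4 then n - (M+4) + a else a - (M+4)) : ℕ) : ℤ)) -
          (((k - (((if a < M+4 then pXn M n a else pYn M n (a - (M+4))) : ℕ) : ZMod n)).val : ℕ) : ℤ)|
      rw [if_pos (show a < M+4 by omega), if_pos (show a < M+4 by omega), hsub,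
        ZMod.val_natCast_of_lt (show b < n by omega)]
      refine le_trans ?_ (le_abs_self _)
      push_cast
      omega
    · refine ⟨⟨(M+4) + b, by omega⟩, ?_⟩
      have hsub : k - (((pYn M n b : ℕ)) : ZMod n) = (((n - (M+4) + a : ℕ)) : ZMod n) := by
        rw [hid]; push_cast; ring
      show (n:ℤ) - ((M+4 : ℕ):ℤ) ≤
        |((((if (M+4) + b < M+4 then n - (M+4) + ((M+4) + b) else ((M+4) + b) - (M+4)) : ℕ) : ℤ)) -
          (((k - (((if (M+4) + b < M+4 then pXn M n ((M+4) + b) else pYn M n (((M+4) + b) - (M+4))) : ℕ) : ZMod n)).val : ℕ) : ℤ)|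
      rw [if_neg (by omega), if_neg (by omega),
        show ((M+4) + b) - (M+4) = b by omega, hsub,
        ZMod.val_natCast_of_lt (show n - (M+4) + a < n by omega)]
      refine le_trans ?_ (neg_le_abs _)
      push_cast
      omega

end Config

/-! ### The small cases n = 4, 5, 6 (m = 3) -/

lemma m3_bound_4 : ((4:ℕ):ℤ) - ((3:ℕ):ℤ) ≤ (coveringRadius (Dn 4 : Set (Perm (Fin 4))) : ℤ) := by
  refine assembly (n := 4) (m := 3) (by norm_num) (by norm_num) (L := 4)
    (fun l => l) (![0, 1, 3, 2]) (fun a b h => h) (by decide) ?_ ?_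
  · intro k; revert k; decide
  · intro k; revert k; decide

lemma m3_bound_5 : ((5:ℕ):ℤ) - ((3:ℕ):ℤ) ≤ (coveringRadius (Dn 5 : Set (Perm (Fin 5))) : ℤ) := by
  refine assembly (n := 5) (m := 3) (by norm_num) (by norm_num) (L := 5)
    (fun l => l) (![0, 2, 3, 1, 4]) (fun a b h => h) (by decide) ?_ ?_
  · intro k; revert k; decide
  · intro k; revert k; decide

lemma m3_bound_6 : ((6:ℕ):ℤ) - ((3:ℕ):ℤ) ≤ (coveringRadius (Dn 6 : Set (Perm (Fin 6))) : ℤ) := by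
  refine assembly (n := 6) (m := 3) (by norm_num) (by norm_num) (L := 6)
    (fun l => l) (![0, 2, 3, 4, 1, 5]) (fun a b h => h) (by decide) ?_ ?_
  · intro k; revert k; decide
  · intro k; revert k; decide

end Stmt11Aux

/-- If `m ≥ 3` and `n` is one of `m(m−1)−2`, `m(m−1)−1`, `m(m−1)`, then
`r(Dₙ) ≥ n − m`. -/
theorem stmt_11 (m n : ℕ) (hm : 3 ≤ m)
    (hn : (n : ℤ) = (m : ℤ) * ((m : ℤ) - 1) - 2 ∨ (n : ℤ) = (m : ℤ) * ((m : ℤ) - 1) - 1 ∨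
      (n : ℤ) = (m : ℤ) * ((m : ℤ) - 1)) :
    (n : ℤ) - (m : ℤ) ≤ (coveringRadius (Dn n : Set (Perm (Fin n))) : ℤ) := by
  have h1 : 1 ≤ m := by omega
  have hmm : ((m * (m-1) : ℕ) : ℤ) = (m:ℤ) * ((m:ℤ) - 1) := by
    have e1 : ((m - 1 : ℕ) : ℤ) = (m:ℤ) - 1 := by omega
    rw [Nat.cast_mul, e1]
  -- turn hn into a ℕ equation n + c = m * (m-1) with c ∈ {0,1,2}
  obtain ⟨cc, hcc, hnat⟩ : ∃ cc : ℕ, cc ≤ 2 ∧ n + cc = m * (m-1) := by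
    rcases hn with h | h | h
    · refine ⟨2, by norm_num, ?_⟩
      have e : ((n + 2 : ℕ) : ℤ) = ((m*(m-1) : ℕ) : ℤ) := by rw [hmm]; push_cast; linarith
      exact_mod_cast e
    · refine ⟨1, by norm_num, ?_⟩
      have e : ((n + 1 : ℕ) : ℤ) = ((m*(m-1) : ℕ) : ℤ) := by rw [hmm]; push_cast; linarith
      exact_mod_cast e
    · refine ⟨0, by norm_num, ?_⟩
      have e : ((n + 0 : ℕ) : ℤ) = ((m*(m-1) : ℕ) : ℤ) := by rw [hmm]; push_cast; linarith
      exact_mod_cast e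
  by_cases hm3 : m = 3
  · subst hm3
    have hn6 : n + cc = 6 := by simpa using hnat
    have : n = 4 ∨ n = 5 ∨ n = 6 := by omega
    rcases this with rfl | rfl | rfl
    · have := Stmt11Aux.m3_bound_4; push_cast at this ⊢; convert this using 2 <;> norm_num
    · have := Stmt11Aux.m3_bound_5; push_cast at this ⊢; convert this using 2 <;> norm_num
    · have := Stmt11Aux.m3_bound_6; push_cast at this ⊢; convert this using 2 <;> norm_num
  · obtain ⟨M, rfl⟩ : ∃ M, m = M + 4 := ⟨m - 4, by omega⟩
    have hnat' : n + cc = (M+4) * (M+3) := by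
      have e : M + 4 - 1 = M + 3 := by omega
      rw [e] at hnat; exact hnat
    have := Stmt11Aux.general_bound hcc hnat'
    push_cast at this ⊢
    exact this
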